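/- Let S = S^T ∈ ℝ^{N×N} with spectral decomposition S = V_p Σ_p V_p^T + V_{p,⊥} Σ'_p V_{p,⊥}^T, where [V_p, V_{p,⊥}] is orthogonal, V_p has p columns, and Σ_p, Σ'_p are diagonal. Let V̂ ∈ ℝ^{N×p} be column orthonormal with V̂^T S V̂ diagonal and let V̂_⊥ complete it to an orthogonal matrix. If ε = ||V_{p,⊥}^T V̂|| (the distance between span{V̂} and span{V_p}), then the residual R = S V̂ − V̂ (V̂^T S V̂) satisfies ||R|| ≤ 2 ||S|| ε. -/

import Mathlib

open Matrix
open scoped Matrix.Norms.L2Operator InnerProductSpace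


private lemma selfadj_norm_le {E : Type*} [NormedAddCommGroup E] [InnerProductSpace ℝ E]
    (B : E →L[ℝ] E) (c : ℝ) (hc : 0 ≤ c)
    (hsym : ∀ x y : E, ⟪B x, y⟫_ℝ = ⟪x, B y⟫_ℝ)
    (h0 : ∀ x : E, 0 ≤ ⟪B x, x⟫_ℝ)
    (h1 : ∀ x : E, ⟪B x, x⟫_ℝ ≤ c * ‖x‖ ^ 2) : ‖B‖ ≤ c := by
  refine B.opNorm_le_bound hc (fun x => ?_)
  rcases eq_or_ne (B x) 0 with hBx | hBx
  · simp [hBx]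
    positivity
  have hxne : x ≠ 0 := by rintro rfl; simp at hBx
  have hxpos : 0 < ‖x‖ := norm_pos_iff.mpr hxne
  have hBxpos : 0 < ‖B x‖ := norm_pos_iff.mpr hBx
  set y : E := (‖x‖ / ‖B x‖) • B x with hy
  have hyn : ‖y‖ = ‖x‖ := by
    rw [hy, norm_smul, Real.norm_eq_abs, abs_of_nonneg (by positivity),
      div_mul_cancel₀ _ (ne_of_gt hBxpos)]
  have hinner : ⟪B x, y⟫_ℝ = ‖x‖ * ‖B x‖ := by
    rw [hy, real_inner_smul_right, real_inner_self_eq_norm_mul_norm]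
    field_simp
  have hsymc : ⟪B y, x⟫_ℝ = ⟪B x, y⟫_ℝ := by
    rw [hsym y x, real_inner_comm]
  have hexp : ⟪B (x + y), x + y⟫_ℝ - ⟪B (x - y), x - y⟫_ℝ = 4 * ⟪B x, y⟫_ℝ := by
    simp only [map_add, map_sub, inner_add_left, inner_add_right, inner_sub_left,
      inner_sub_right]
    linarith [hsymc]
  have hpar := parallelogram_law_with_norm ℝ x y
  have h4 : 4 * ⟪B x, y⟫_ℝ ≤ c * (‖x + y‖ * ‖x + y‖) := by
    have ha := h1 (x + y)
    have hb := h0 (x - y)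
    nlinarith [sq_nonneg ‖x + y‖]
  have h5 : 4 * (‖x‖ * ‖B x‖) ≤ 4 * (c * (‖x‖ * ‖x‖)) := by
    rw [← hinner]
    rw [hyn] at hpar
    have hb : 0 ≤ c * (‖x - y‖ * ‖x - y‖) := by positivity
    have hparc : c * (‖x + y‖ * ‖x + y‖) + c * (‖x - y‖ * ‖x - y‖)
        = 2 * c * (‖x‖ * ‖x‖ + ‖x‖ * ‖x‖) := by linear_combination c * hpar
    linarith
  nlinarith [hxpos]


private lemma adjoint_comp_norm {E : Type*} [NormedAddCommGroup E] [InnerProductSpace ℝ E]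
    [FiniteDimensional ℝ E] (T : E →L[ℝ] E) (hT : ‖T‖ ≤ 1) :
    ‖1 - T * ContinuousLinearMap.adjoint T‖ ≤ ‖1 - ContinuousLinearMap.adjoint T * T‖ := by
  set Ts := ContinuousLinearMap.adjoint T with hTs
  set c := ‖1 - Ts * T‖ with hc
  have hc0 : 0 ≤ c := norm_nonneg _
  have hadjnorm : ‖Ts‖ = ‖T‖ := ContinuousLinearMap.adjoint.norm_map T
  have key1 : ∀ x : E, ⟪(1 - Ts * T) x, x⟫_ℝ = ‖x‖ ^ 2 - ‖T x‖ ^ 2 := by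
    intro x
    simp only [ContinuousLinearMap.sub_apply, ContinuousLinearMap.one_apply,
      ContinuousLinearMap.mul_apply, inner_sub_left]
    rw [hTs, ContinuousLinearMap.adjoint_inner_left, real_inner_self_eq_norm_sq,
      real_inner_self_eq_norm_sq]
  have key2 : ∀ x : E, ⟪(1 - T * Ts) x, x⟫_ℝ = ‖x‖ ^ 2 - ‖Ts x‖ ^ 2 := by
    intro x
    simp only [ContinuousLinearMap.sub_apply, ContinuousLinearMap.one_apply,
      ContinuousLinearMap.mul_apply, inner_sub_left]
    rw [hTs, ← ContinuousLinearMap.adjoint_inner_right, real_inner_self_eq_norm_sq,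
      real_inner_self_eq_norm_sq]
  have lower : ∀ x : E, (1 - c) * ‖x‖ ^ 2 ≤ ‖T x‖ ^ 2 := by
    intro x
    have h := key1 x
    have habs : ⟪(1 - Ts * T) x, x⟫_ℝ ≤ c * ‖x‖ ^ 2 := by
      calc ⟪(1 - Ts * T) x, x⟫_ℝ ≤ ‖(1 - Ts * T) x‖ * ‖x‖ := real_inner_le_norm _ _
        _ ≤ (c * ‖x‖) * ‖x‖ := by
            have := (1 - Ts * T).le_opNorm x
            nlinarith [norm_nonneg x]
        _ = c * ‖x‖ ^ 2 := by ring
    nlinarith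
  have lower' : ∀ y : E, (1 - c) * ‖y‖ ^ 2 ≤ ‖Ts y‖ ^ 2 := by
    rcases le_or_gt 1 c with h1c | h1c
    · intro y
      nlinarith [sq_nonneg ‖Ts y‖, sq_nonneg ‖y‖]
    · have hinj : Function.Injective T := by
        intro a b hab
        have hz : T (a - b) = 0 := by rw [map_sub, hab, sub_self]
        have h2 := lower (a - b)
        rw [hz] at h2
        simp only [norm_zero] at h2
        have : ‖a - b‖ ^ 2 ≤ 0 := by nlinarith [sq_nonneg ‖a - b‖]
        have : ‖a - b‖ = 0 := by nlinarith [norm_nonneg (a - b)]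
        have : a - b = 0 := norm_eq_zero.mp this
        exact sub_eq_zero.mp this
      have hsurj : Function.Surjective T := by
        have h := LinearMap.injective_iff_surjective (f := (T : E →ₗ[ℝ] E))
        exact h.mp hinj
      intro y
      rcases eq_or_ne y 0 with rfl | hy0
      · simp
      obtain ⟨z, hz⟩ := hsurj y
      have h1 : ‖y‖ ^ 2 = ⟪Ts y, z⟫_ℝ := by
        rw [hTs, ContinuousLinearMap.adjoint_inner_left, hz, real_inner_self_eq_norm_sq]
      have h2 : ⟪Ts y, z⟫_ℝ ≤ ‖Ts y‖ * ‖z‖ := real_inner_le_norm _ _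
      have h3 : (1 - c) * ‖z‖ ^ 2 ≤ ‖y‖ ^ 2 := by
        have := lower z; rwa [hz] at this
      have hyp : 0 < ‖y‖ := norm_pos_iff.mpr hy0
      have h12 : ‖y‖ ^ 2 ≤ ‖Ts y‖ * ‖z‖ := h1.le.trans h2
      have e1 : ‖y‖ ^ 2 * ‖y‖ ^ 2 ≤ (‖Ts y‖ * ‖z‖) * (‖Ts y‖ * ‖z‖) := by
        nlinarith [sq_nonneg ‖y‖]
      nlinarith [sq_nonneg (‖Ts y‖ * ‖z‖), sq_nonneg ‖Ts y‖, sq_nonneg ‖z‖, hyp,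
        mul_pos hyp hyp, norm_nonneg (Ts y), norm_nonneg z]
  have hsym : ∀ x y : E, ⟪(1 - T * Ts) x, y⟫_ℝ = ⟪x, (1 - T * Ts) y⟫_ℝ := by
    intro x y
    have e1 : ⟪T (Ts x), y⟫_ℝ = ⟪x, T (Ts y)⟫_ℝ := by
      calc ⟪T (Ts x), y⟫_ℝ = ⟪Ts x, Ts y⟫_ℝ := by
            rw [hTs, ContinuousLinearMap.adjoint_inner_right]
        _ = ⟪x, T (Ts y)⟫_ℝ := by
            rw [hTs, ContinuousLinearMap.adjoint_inner_left]
    simp only [ContinuousLinearMap.sub_apply, ContinuousLinearMap.one_apply,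
      ContinuousLinearMap.mul_apply, inner_sub_left, inner_sub_right]
    rw [e1]
  have h0 : ∀ x : E, 0 ≤ ⟪(1 - T * Ts) x, x⟫_ℝ := by
    intro x
    rw [key2 x]
    have h5 := Ts.le_opNorm x
    have h6 : ‖Ts‖ * ‖x‖ ≤ 1 * ‖x‖ :=
      mul_le_mul_of_nonneg_right (hadjnorm ▸ hT) (norm_nonneg x)
    nlinarith [norm_nonneg x, norm_nonneg (Ts x)]
  have h1 : ∀ x : E, ⟪(1 - T * Ts) x, x⟫_ℝ ≤ c * ‖x‖ ^ 2 := by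
    intro x
    rw [key2 x]
    have := lower' x
    nlinarith
  exact selfadj_norm_le _ c hc0 hsym h0 h1

noncomputable def snorm {m n : Type*} [Fintype m] [Fintype n] [DecidableEq n]
    (A : Matrix m n ℝ) : ℝ :=
  ‖LinearMap.toContinuousLinearMap (Matrix.toEuclideanLin A)‖

private lemma snorm_eq_norm {m n : Type*} [Fintype m] [Fintype n] [DecidableEq n]
    (A : Matrix m n ℝ) : snorm A = ‖A‖ := rfl

private lemma mnorm_transpose {m n : Type*} [Fintype m] [Fintype n] [DecidableEq m]
    [DecidableEq n] (A : Matrix m n ℝ) : ‖Aᵀ‖ = ‖A‖ := by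
  rw [← conjTranspose_eq_transpose_of_trivial]
  exact l2_opNorm_conjTranspose A

private lemma mnorm_sq {m n : Type*} [Fintype m] [Fintype n] [DecidableEq m]
    [DecidableEq n] (A : Matrix m n ℝ) : ‖Aᵀ * A‖ = ‖A‖ * ‖A‖ := by
  rw [← conjTranspose_eq_transpose_of_trivial]
  exact l2_opNorm_conjTranspose_mul_self A

private lemma mnorm_orth_le_one {m n : Type*} [Fintype m] [Fintype n] [DecidableEq m]
    [DecidableEq n] (A : Matrix m n ℝ) (h : Aᵀ * A = 1) : ‖A‖ ≤ 1 := by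
  have h1 : ‖(1 : Matrix n n ℝ)‖ ≤ 1 := by
    have h := mnorm_sq (1 : Matrix n n ℝ)
    rw [transpose_one, mul_one] at h
    nlinarith [norm_nonneg (1 : Matrix n n ℝ)]
  have h2 := mnorm_sq A
  rw [h] at h2
  nlinarith [norm_nonneg A]

private lemma crux_mat {p : ℕ} (B : Matrix (Fin p) (Fin p) ℝ) (hB : ‖B‖ ≤ 1) :
    ‖1 - B * Bᵀ‖ ≤ ‖1 - Bᵀ * B‖ := by
  rw [← conjTranspose_eq_transpose_of_trivial]
  rw [cstar_norm_def (1 - B * Bᴴ), cstar_norm_def (1 - Bᴴ * B)]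
  simp only [map_sub, _root_.map_one, _root_.map_mul]
  have hstar : toEuclideanCLM (𝕜 := ℝ) Bᴴ
      = ContinuousLinearMap.adjoint (toEuclideanCLM (𝕜 := ℝ) B) := by
    rw [← ContinuousLinearMap.star_eq_adjoint, ← map_star, Matrix.star_eq_conjTranspose]
  rw [hstar]
  exact adjoint_comp_norm _ (by rw [← cstar_norm_def]; exact hB)

private lemma pb {a b c : ℕ} (A : Matrix (Fin a) (Fin b) ℝ) (B : Matrix (Fin b) (Fin c) ℝ)
    (x y : ℝ) (hA : ‖A‖ ≤ x) (hB : ‖B‖ ≤ y) (hx : 0 ≤ x) : ‖A * B‖ ≤ x * y := by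
  calc ‖A * B‖ ≤ ‖A‖ * ‖B‖ := l2_opNorm_mul _ _
    _ ≤ x * y := mul_le_mul hA hB (norm_nonneg _) hx

theorem ritz_residual_bound
    (N p q : ℕ) (hNpq : N = p + q)
    (S : Matrix (Fin N) (Fin N) ℝ) (hS : S.IsSymm)
    (Vp : Matrix (Fin N) (Fin p) ℝ) (Vpperp : Matrix (Fin N) (Fin q) ℝ)
    (Sp : Fin p → ℝ) (Sq : Fin q → ℝ)
    (horthV : (Matrix.fromCols Vp Vpperp)ᵀ * Matrix.fromCols Vp Vpperp = 1)
    (hcompleteV : Matrix.fromCols Vp Vpperp * (Matrix.fromCols Vp Vpperp)ᵀ = 1)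
    (hSdecomp : S = Vp * Matrix.diagonal Sp * Vpᵀ +
      Vpperp * Matrix.diagonal Sq * Vpperpᵀ)
    (Vh : Matrix (Fin N) (Fin p) ℝ) (Vhperp : Matrix (Fin N) (Fin q) ℝ)
    (hVh : Vhᵀ * Vh = 1)
    (hdiag : (Vhᵀ * S * Vh).IsDiag)
    (horthVh : (Matrix.fromCols Vh Vhperp)ᵀ * Matrix.fromCols Vh Vhperp = 1)
    (hcompleteVh : Matrix.fromCols Vh Vhperp * (Matrix.fromCols Vh Vhperp)ᵀ = 1)
    (ε : ℝ) (hε : ε = snorm (Vpperpᵀ * Vh))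
    (R : Matrix (Fin N) (Fin p) ℝ)
    (hR : R = S * Vh - Vh * (Vhᵀ * S * Vh)) :
    snorm R ≤ 2 * snorm S * ε := by
  rw [snorm_eq_norm, snorm_eq_norm]
  rw [snorm_eq_norm] at hε
  -- block identities
  rw [transpose_fromCols, fromRows_mul_fromCols, ← fromBlocks_one,
    fromBlocks_inj] at horthV horthVh
  obtain ⟨hVpVp, hVpVq, hVqVp, hVqVq⟩ := horthV
  obtain ⟨hWpWp, hWpWq, hWqWp, hWqWq⟩ := horthVh
  rw [transpose_fromCols, fromCols_mul_fromRows] at hcompleteV hcompleteVh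
  have hWWt : Vhperp * Vhperpᵀ = 1 - Vh * Vhᵀ := eq_sub_of_add_eq' hcompleteVh
  have hVVt : Vpperp * Vpperpᵀ = 1 - Vp * Vpᵀ := eq_sub_of_add_eq' hcompleteV
  -- absorption lemmas
  have e_pp : ∀ {k : ℕ} (X : Matrix (Fin p) (Fin k) ℝ), Vpᵀ * (Vp * X) = X := by
    intro k X; rw [← Matrix.mul_assoc, hVpVp, Matrix.one_mul]
  have e_pq : ∀ {k : ℕ} (X : Matrix (Fin q) (Fin k) ℝ), Vpᵀ * (Vpperp * X) = 0 := by
    intro k X; rw [← Matrix.mul_assoc, hVpVq, Matrix.zero_mul]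
  have e_qp : ∀ {k : ℕ} (X : Matrix (Fin p) (Fin k) ℝ), Vpperpᵀ * (Vp * X) = 0 := by
    intro k X; rw [← Matrix.mul_assoc, hVqVp, Matrix.zero_mul]
  have e_qq : ∀ {k : ℕ} (X : Matrix (Fin q) (Fin k) ℝ), Vpperpᵀ * (Vpperp * X) = X := by
    intro k X; rw [← Matrix.mul_assoc, hVqVq, Matrix.one_mul]
  -- norms of orthonormal blocks
  have nVp : ‖Vp‖ ≤ 1 := mnorm_orth_le_one _ hVpVp
  have nVq : ‖Vpperp‖ ≤ 1 := mnorm_orth_le_one _ hVqVq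
  have nVh : ‖Vh‖ ≤ 1 := mnorm_orth_le_one _ hVh
  have nW : ‖Vhperp‖ ≤ 1 := mnorm_orth_le_one _ hWqWq
  have hε0 : 0 ≤ ε := hε ▸ norm_nonneg _
  have hS0 : 0 ≤ ‖S‖ := norm_nonneg S
  -- diagonal block norms
  have hSpD : Vpᵀ * (S * Vp) = Matrix.diagonal Sp := by
    rw [hSdecomp]
    simp only [Matrix.add_mul, Matrix.mul_add, Matrix.mul_assoc, hVpVp, hVqVp,
      Matrix.mul_one, Matrix.mul_zero, Matrix.zero_mul, add_zero, zero_add, e_pp, e_pq]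
  have hSqD : Vpperpᵀ * (S * Vpperp) = Matrix.diagonal Sq := by
    rw [hSdecomp]
    simp only [Matrix.add_mul, Matrix.mul_add, Matrix.mul_assoc, hVpVq, hVqVq,
      Matrix.mul_one, Matrix.mul_zero, Matrix.zero_mul, add_zero, zero_add, e_qp, e_qq]
  have tri : ∀ {a b : ℕ} (P : Matrix (Fin N) (Fin a) ℝ) (Q : Matrix (Fin N) (Fin b) ℝ),
      ‖P‖ ≤ 1 → ‖Q‖ ≤ 1 → ‖Pᵀ * (S * Q)‖ ≤ ‖S‖ := by
    intro a b P Q hP hQ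
    have h1 : ‖Pᵀ * (S * Q)‖ ≤ 1 * (‖S‖ * 1) := by
      refine pb _ _ 1 (‖S‖ * 1) ?_ ?_ zero_le_one
      · rw [mnorm_transpose]; exact hP
      · exact pb _ _ ‖S‖ 1 le_rfl hQ hS0
    linarith
  have hDp : ‖Matrix.diagonal Sp‖ ≤ ‖S‖ := hSpD ▸ tri Vp Vp nVp nVp
  have hDq : ‖Matrix.diagonal Sq‖ ≤ ‖S‖ := hSqD ▸ tri Vpperp Vpperp nVq nVq
  -- R = Vhperp Vhperpᵀ S Vh
  have hR2 : R = (Vhperp * Vhperpᵀ) * (S * Vh) := by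
    rw [hR, hWWt, Matrix.sub_mul, Matrix.one_mul]
    simp only [Matrix.mul_assoc]
  have hK : Vhperpᵀ * (S * Vh) =
      (Vhperpᵀ * Vp) * (Matrix.diagonal Sp * (Vpᵀ * Vh)) +
      (Vhperpᵀ * Vpperp) * (Matrix.diagonal Sq * (Vpperpᵀ * Vh)) := by
    rw [hSdecomp]
    simp only [Matrix.add_mul, Matrix.mul_add, Matrix.mul_assoc]
  -- the key ε bound on ‖Vhperpᵀ Vp‖
  have hY1 : ‖Vpᵀ * Vh‖ ≤ 1 := by
    have := pb Vpᵀ Vh 1 1 (by rw [mnorm_transpose]; exact nVp) nVh zero_le_one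
    linarith
  have hZZ : (Vhperpᵀ * Vp)ᵀ * (Vhperpᵀ * Vp) = 1 - (Vpᵀ * Vh) * (Vpᵀ * Vh)ᵀ := by
    rw [transpose_mul, transpose_transpose, transpose_mul, transpose_transpose,
      ← Matrix.mul_assoc, Matrix.mul_assoc Vpᵀ, hWWt]
    simp only [Matrix.mul_sub, Matrix.sub_mul, Matrix.mul_one, Matrix.one_mul,
      Matrix.mul_assoc, hVpVp]
  have hYY : (Vpperpᵀ * Vh)ᵀ * (Vpperpᵀ * Vh) = 1 - (Vpᵀ * Vh)ᵀ * (Vpᵀ * Vh) := by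
    rw [transpose_mul, transpose_transpose, transpose_mul, transpose_transpose,
      ← Matrix.mul_assoc, Matrix.mul_assoc Vhᵀ, hVVt]
    simp only [Matrix.mul_sub, Matrix.sub_mul, Matrix.mul_one, Matrix.one_mul,
      Matrix.mul_assoc, hVh]
  have hz2 : ‖Vhperpᵀ * Vp‖ * ‖Vhperpᵀ * Vp‖ = ‖1 - (Vpᵀ * Vh) * (Vpᵀ * Vh)ᵀ‖ := by
    rw [← hZZ, mnorm_sq]
  have hy2 : ε * ε = ‖1 - (Vpᵀ * Vh)ᵀ * (Vpᵀ * Vh)‖ := by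
    rw [hε, ← hYY, mnorm_sq]
  have hcrux := crux_mat (Vpᵀ * Vh) hY1
  have hZ1 : ‖Vhperpᵀ * Vp‖ ≤ ε := by
    nlinarith [norm_nonneg (Vhperpᵀ * Vp), hε0]
  -- assemble
  have hZ2 : ‖Vhperpᵀ * Vpperp‖ ≤ 1 := by
    have := pb Vhperpᵀ Vpperp 1 1 (by rw [mnorm_transpose]; exact nW) nVq zero_le_one
    linarith
  have hY2 : ‖Vpperpᵀ * Vh‖ ≤ ε := le_of_eq hε.symm
  have hA1 : ‖(Vhperpᵀ * Vp) * (Matrix.diagonal Sp * (Vpᵀ * Vh))‖ ≤ ε * ‖S‖ := by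
    have h1 : ‖Matrix.diagonal Sp * (Vpᵀ * Vh)‖ ≤ ‖S‖ * 1 := pb _ _ _ _ hDp hY1 hS0
    have h2 := pb (Vhperpᵀ * Vp) (Matrix.diagonal Sp * (Vpᵀ * Vh)) ε (‖S‖ * 1) hZ1
      (by linarith) hε0
    linarith [h2]
  have hA2 : ‖(Vhperpᵀ * Vpperp) * (Matrix.diagonal Sq * (Vpperpᵀ * Vh))‖ ≤ ‖S‖ * ε := by
    have h1 : ‖Matrix.diagonal Sq * (Vpperpᵀ * Vh)‖ ≤ ‖S‖ * ε := pb _ _ _ _ hDq hY2 hS0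
    have h2 := pb (Vhperpᵀ * Vpperp) (Matrix.diagonal Sq * (Vpperpᵀ * Vh)) 1 (‖S‖ * ε) hZ2
      h1 zero_le_one
    linarith [h2]
  have hRb : ‖R‖ ≤ ‖Vhperpᵀ * (S * Vh)‖ := by
    rw [hR2, Matrix.mul_assoc]
    have := pb Vhperp (Vhperpᵀ * (S * Vh)) 1 ‖Vhperpᵀ * (S * Vh)‖ nW le_rfl zero_le_one
    simpa using this
  rw [hK] at hRb
  have htriangle := norm_add_le ((Vhperpᵀ * Vp) * (Matrix.diagonal Sp * (Vpᵀ * Vh)))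
    ((Vhperpᵀ * Vpperp) * (Matrix.diagonal Sq * (Vpperpᵀ * Vh)))
  linarith
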